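/- Let S be an AG-groupoid with left identity such that every fuzzy left ideal of S is idempotent under the sup-min convolution product. Then S is intra-regular: for every a in S there exist x, y in S with a = (x*(a*a))*y. -/
import Mathlib


/-- If every fuzzy left ideal of an AG-groupoid with left identity is
    idempotent under the sup-min convolution, then S is intra-regular. -/
theorem ag_intra_regular_of_fuzzy_idempotent {S : Type*} (mul : S → S → S)
    (hinv : ∀ a b c : S, mul (mul a b) c = mul (mul c b) a)
    (e : S) (he : ∀ x : S, mul e x = x)
    (h : ∀ μ : S → ℝ, (∀ x, 0 ≤ μ x) → (∀ x, μ x ≤ 1) →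
      (∀ u v : S, μ v ≤ μ (mul u v)) →
      (∀ a : S,
        sSup {t : ℝ | ∃ b c : S, a = mul b c ∧ t = min (μ b) (μ c)}
          = μ a)) :
    ∀ a : S, ∃ x y : S, a = mul (mul x (mul a a)) y := by
  classical
  -- medial law
  have medial : ∀ p q r s : S,
      mul (mul p q) (mul r s) = mul (mul p r) (mul q s) := by
    intro p q r s
    rw [hinv p q (mul r s), hinv r s q, hinv (mul q s) r p]
  -- paramedial law
  have paramedial : ∀ p q r s : S,
      mul (mul p q) (mul r s) = mul (mul s r) (mul q p) := by
    intro p q r s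
    have : mul (mul s r) (mul q p) = mul (mul p q) (mul r s) := by
      calc mul (mul s r) (mul q p)
          = mul (mul (mul e s) r) (mul q p) := by rw [he]
        _ = mul (mul (mul r s) e) (mul q p) := by rw [hinv e s r]
        _ = mul (mul (mul r s) q) (mul e p) := medial (mul r s) e q p
        _ = mul (mul (mul r s) q) p := by rw [he]
        _ = mul (mul (mul q s) r) p := by rw [hinv r s q]
        _ = mul (mul p r) (mul q s) := hinv (mul q s) r p
        _ = mul (mul p q) (mul r s) := (medial p q r s).symm
    exact this.symm
  intro a
  -- S*a is closed under left multiplication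
  have hclosed : ∀ u s : S, mul u (mul s a) = mul (mul (mul u e) s) a := by
    intro u s
    calc mul u (mul s a)
        = mul (mul e u) (mul s a) := by rw [he]
      _ = mul (mul a s) (mul u e) := paramedial e u s a
      _ = mul (mul (mul u e) s) a := hinv a s (mul u e)
  -- indicator of the left ideal S*a
  set μ : S → ℝ := fun x => if ∃ s : S, x = mul s a then 1 else 0 with hμ
  have h0 : ∀ x, 0 ≤ μ x := by
    intro x; simp only [hμ]; split <;> norm_num
  have h1 : ∀ x, μ x ≤ 1 := by
    intro x; simp only [hμ]; split <;> norm_num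
  have hli : ∀ u v : S, μ v ≤ μ (mul u v) := by
    intro u v
    simp only [hμ]
    by_cases hv : ∃ s : S, v = mul s a
    · obtain ⟨s, rfl⟩ := hv
      have : ∃ t : S, mul u (mul s a) = mul t a := ⟨mul (mul u e) s, hclosed u s⟩
      rw [if_pos ⟨s, rfl⟩, if_pos this]
    · rw [if_neg hv]; split <;> norm_num
  have key := h μ h0 h1 hli a
  have hμa : μ a = 1 := by
    simp only [hμ]
    rw [if_pos ⟨e, (he a).symm⟩]
  rw [hμa] at key
  -- extract a factorization with both factors in S*a
  have hex : ∃ t ∈ {t : ℝ | ∃ b c : S, a = mul b c ∧ t = min (μ b) (μ c)},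
      (1:ℝ)/2 < t := by
    by_contra hc
    push_neg at hc
    have := Real.sSup_le (fun x hx => hc x hx) (by norm_num)
    rw [key] at this
    linarith
  obtain ⟨t, ⟨b, c, hbc, ht⟩, htgt⟩ := hex
  rw [ht] at htgt
  have hb2 : (1:ℝ)/2 < μ b := lt_of_lt_of_le htgt (min_le_left _ _)
  have hc2 : (1:ℝ)/2 < μ c := lt_of_lt_of_le htgt (min_le_right _ _)
  have hb3 : ∃ s : S, b = mul s a := by
    by_contra hn
    simp only [hμ, if_neg hn] at hb2
    linarith
  have hc3 : ∃ s : S, c = mul s a := by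
    by_contra hn
    simp only [hμ, if_neg hn] at hc2
    linarith
  obtain ⟨s, rfl⟩ := hb3
  obtain ⟨r, rfl⟩ := hc3
  -- a = (s a)(r a) = (s r)(a a), so a = (e (a a)) ((s r) e)
  refine ⟨e, mul (mul s r) e, ?_⟩
  calc a = mul (mul s a) (mul r a) := hbc
    _ = mul (mul s r) (mul a a) := medial s a r a
    _ = mul (mul e (mul s r)) (mul a a) := by rw [he]
    _ = mul (mul a a) (mul (mul s r) e) := paramedial e (mul s r) a a
    _ = mul (mul e (mul a a)) (mul (mul s r) e) := by rw [he]
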